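/- Let G be a finite abelian group and let H and K be subgroups of G. Then T_{G/H}(e_K) = ((G:H)·|K∩H|/|K|) · e_{K∩H} in ℂ[H]; equivalently, (G:K)⁻¹ · T_{G/H}(e_K) = (H : K∩H)⁻¹ · e_{K∩H}. Here e_K = |K|⁻¹ ∑_{k∈K} k ∈ ℂ[G] and e_{K∩H} = |K∩H|⁻¹ ∑_{x∈K∩H} x is viewed as an element of ℂ[H] (K∩H being a subgroup of H). -/

import Mathlib

/-- For a subgroup `K` of a group `Γ`, the idempotent `e_K := |K|⁻¹ ∑_{k ∈ K} k` of the group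
algebra `ℂ[Γ]`. -/
noncomputable def grpIdem (Γ : Type*) [CommGroup Γ] (K : Subgroup Γ) : MonoidAlgebra ℂ Γ :=
  (Nat.card K : ℂ)⁻¹ • ∑ᶠ k : K, MonoidAlgebra.of ℂ Γ (k : Γ)

/-- The trace map `T_{G/H} : ℂ[G] → ℂ[H]`: the trace, over `ℂ[H]`, of the `ℂ[H]`-linear
endomorphism of `ℂ[G]` given by multiplication by `λ`, where `ℂ[G]` is a `ℂ[H]`-module via
the inclusion-induced ring homomorphism `ℂ[H] → ℂ[G]`. -/
noncomputable def grpTrace (G : Type*) [CommGroup G] (H : Subgroup G)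
    (lam : MonoidAlgebra ℂ G) : MonoidAlgebra ℂ ↥H :=
  letI : Algebra (MonoidAlgebra ℂ ↥H) (MonoidAlgebra ℂ G) :=
    (MonoidAlgebra.mapDomainRingHom ℂ H.subtype).toAlgebra
  LinearMap.trace (MonoidAlgebra ℂ ↥H) (MonoidAlgebra ℂ G)
    (LinearMap.mulLeft (MonoidAlgebra ℂ ↥H) lam)

namespace Stmt10Aux

open MonoidAlgebra Finsupp

variable {G : Type*} [CommGroup G] (H : Subgroup G)

/-- The `H`-part of `g : G`, relative to the chosen coset representative. -/
noncomputable def hpart (g : G) : ↥H :=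
  ⟨(Quotient.out (QuotientGroup.mk (s := H) g))⁻¹ * g,
    QuotientGroup.eq.mp (QuotientGroup.out_eq' (QuotientGroup.mk (s := H) g))⟩

/-- `G ≃ (G ⧸ H) × H`, splitting each element into its coset and `H`-part. -/
noncomputable def cosetEquiv : G ≃ (G ⧸ H) × ↥H where
  toFun g := (QuotientGroup.mk g, hpart H g)
  invFun p := Quotient.out p.1 * (p.2 : G)
  left_inv g := by simp [hpart, mul_inv_cancel_left]
  right_inv p := by
    obtain ⟨q, h⟩ := p
    have hq : QuotientGroup.mk (s := H) (Quotient.out q * (h : G)) = q := by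
      rw [QuotientGroup.mk_mul_of_mem _ h.2, QuotientGroup.out_eq']
    refine Prod.ext hq (Subtype.ext ?_)
    show (Quotient.out (QuotientGroup.mk (s := H) _))⁻¹ * _ = _
    rw [hq, inv_mul_cancel_left]

/-- The `ℂ`-linear splitting `ℂ[G] ≃ (G⧸H) →₀ ℂ[H]`. -/
noncomputable def L0 : MonoidAlgebra ℂ G ≃ₗ[ℂ] ((G ⧸ H) →₀ MonoidAlgebra ℂ ↥H) :=
  (MonoidAlgebra.coeffLinearEquiv ℂ).trans ((Finsupp.domLCongr (cosetEquiv H)).trans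
    ((Finsupp.finsuppProdLEquiv ℂ).trans
      (Finsupp.mapRange.linearEquiv (MonoidAlgebra.coeffLinearEquiv ℂ).symm)))

lemma L0_single (g : G) (c : ℂ) :
    L0 H (MonoidAlgebra.single g c) =
      Finsupp.single (QuotientGroup.mk g) (MonoidAlgebra.single (hpart H g) c) := by
  classical
  ext q h
  simp only [L0, LinearEquiv.trans_apply]
  erw [Finsupp.domLCongr_single]
  simp only [Finsupp.mapRange.linearEquiv_apply, Finsupp.mapRange_apply,
    Finsupp.curryLinearEquiv_apply, Finsupp.curry_apply, LinearEquiv.coe_toEquiv_symm]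
  show (Finsupp.single (cosetEquiv H g) c) (q, h) =
    ((Finsupp.single (QuotientGroup.mk g) (MonoidAlgebra.single (hpart H g) c) q).coeff h)
  rw [Finsupp.single_apply (a := QuotientGroup.mk g)]
  split_ifs <;> simp_all [MonoidAlgebra.coeff_single, cosetEquiv, Finsupp.single_apply]

lemma L0_mul_single (h : ↥H) (c : ℂ) (x : MonoidAlgebra ℂ G) :
    L0 H (MonoidAlgebra.single (H.subtype h) c * x) =
      MonoidAlgebra.single h c • L0 H x := by
  classical
  induction x using MonoidAlgebra.induction_linear with
  | zero => simp
  | add f g hf hg => rw [mul_add, map_add, map_add, smul_add, hf, hg]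
  | single g d =>
      have h1 : (MonoidAlgebra.single (H.subtype h) c * MonoidAlgebra.single g d)
          = MonoidAlgebra.single (H.subtype h * g) (c * d) :=
        MonoidAlgebra.single_mul_single ..
      rw [h1, L0_single, L0_single]
      have h2 : (MonoidAlgebra.single h c : MonoidAlgebra ℂ ↥H) •
          (Finsupp.single (QuotientGroup.mk g) (MonoidAlgebra.single (hpart H g) d)
            : (G ⧸ H) →₀ MonoidAlgebra ℂ ↥H) =
          Finsupp.single (QuotientGroup.mk g)
            (MonoidAlgebra.single h c * MonoidAlgebra.single (hpart H g) d) :=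
        Finsupp.smul_single _ _ _
      rw [h2]
      have hmk : QuotientGroup.mk (s := H) (H.subtype h * g) = QuotientGroup.mk g := by
        rw [mul_comm]; exact QuotientGroup.mk_mul_of_mem g h.2
      rw [hmk]
      congr 1
      have hp : hpart H (H.subtype h * g) = h * hpart H g := by
        refine Subtype.ext ?_
        show (Quotient.out (QuotientGroup.mk (s := H) (H.subtype h * g)))⁻¹ * _ = _
        rw [hmk]
        show _ = (h : G) * ((Quotient.out (QuotientGroup.mk (s := H) g))⁻¹ * g)
        rw [mul_left_comm]
        rfl
      rw [hp]
      exact (MonoidAlgebra.single_mul_single ..).symm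

lemma L0_mul (c : MonoidAlgebra ℂ ↥H) (x : MonoidAlgebra ℂ G) :
    L0 H (MonoidAlgebra.mapDomainRingHom ℂ H.subtype c * x) = c • L0 H x := by
  classical
  induction c using MonoidAlgebra.induction_linear with
  | zero => simp
  | add f g hf hg => rw [map_add, add_mul, map_add, add_smul, hf, hg]
  | single h d =>
      have h1 : (MonoidAlgebra.mapDomainRingHom ℂ H.subtype) (MonoidAlgebra.single h d) =
          MonoidAlgebra.single (H.subtype h) d := by
        simp [MonoidAlgebra.mapDomainRingHom, Finsupp.mapDomain_single]
      rw [h1]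
      exact L0_mul_single H h d x

/-- The `ℂ[H]`-linear splitting `ℂ[G] ≃ (G⧸H) →₀ ℂ[H]`. -/
noncomputable def LL :
    letI : Algebra (MonoidAlgebra ℂ ↥H) (MonoidAlgebra ℂ G) :=
      (MonoidAlgebra.mapDomainRingHom ℂ H.subtype).toAlgebra
    MonoidAlgebra ℂ G ≃ₗ[MonoidAlgebra ℂ ↥H] ((G ⧸ H) →₀ MonoidAlgebra ℂ ↥H) :=
  letI : Algebra (MonoidAlgebra ℂ ↥H) (MonoidAlgebra ℂ G) :=
    (MonoidAlgebra.mapDomainRingHom ℂ H.subtype).toAlgebra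
  { toFun := L0 H
    map_add' := (L0 H).map_add
    map_smul' := fun c x => by
      simp only [RingHom.id_apply]
      have : c • x = MonoidAlgebra.mapDomainRingHom ℂ H.subtype c * x := rfl
      rw [this]
      exact L0_mul H c x
    invFun := (L0 H).symm
    left_inv := (L0 H).left_inv
    right_inv := (L0 H).right_inv }

lemma LL_apply (x : MonoidAlgebra ℂ G) : LL H x = L0 H x := rfl

end Stmt10Aux

open Stmt10Aux in
/-- Let `G` be a finite abelian group and `H, K ≤ G`.  Then
`T_{G/H}(e_K) = ((G:H)·|K∩H|/|K|) · e_{K∩H}` in `ℂ[H]`, where `e_{K∩H}` is the idempotent of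
the subgroup `K ∩ H` of `H`. -/
theorem stmt10 (G : Type*) [CommGroup G] [Finite G] (H K : Subgroup G) :
    grpTrace G H (grpIdem G K) =
      (((Nat.card (G ⧸ H) : ℂ) * (Nat.card ↥(K ⊓ H) : ℂ)) / (Nat.card K : ℂ)) •
        grpIdem ↥H (K.subgroupOf H) := by
  classical
  letI : Algebra (MonoidAlgebra ℂ ↥H) (MonoidAlgebra ℂ G) :=
    (MonoidAlgebra.mapDomainRingHom ℂ H.subtype).toAlgebra
  letI : Fintype (G ⧸ H) := Fintype.ofFinite _
  letI : Fintype ↥K := Fintype.ofFinite _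
  letI : Fintype ↥(K.subgroupOf H) := Fintype.ofFinite _
  set S : MonoidAlgebra ℂ ↥H :=
    ∑ y : ↥(K.subgroupOf H), MonoidAlgebra.single (y : ↥H) (1 : ℂ) with hS
  -- the basis
  let b : Module.Basis (G ⧸ H) (MonoidAlgebra ℂ ↥H) (MonoidAlgebra ℂ G) := Module.Basis.ofRepr (LL H)
  have hbq : ∀ q : G ⧸ H, b q = MonoidAlgebra.single (Quotient.out q) (1 : ℂ) := by
    intro q
    have h1 : LL H (MonoidAlgebra.single (Quotient.out q) (1:ℂ)) = Finsupp.single q 1 := by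
      rw [LL_apply, L0_single]
      have h2 : hpart H (Quotient.out q) = 1 := by
        refine Subtype.ext ?_
        show (Quotient.out (QuotientGroup.mk (s := H) (Quotient.out q)))⁻¹ * _ = _
        rw [QuotientGroup.out_eq', inv_mul_cancel]
        rfl
      rw [QuotientGroup.out_eq', h2]
      rfl
    exact (LL H).injective ((b.repr_self q).trans h1.symm)
  -- expand e_K
  have heK : grpIdem G K = (Nat.card K : ℂ)⁻¹ •
      ∑ k : ↥K, MonoidAlgebra.single ((k : G)) (1:ℂ) := by
    rw [grpIdem, finsum_eq_sum_of_fintype]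
    rfl
  -- the diagonal entries
  have hdiag : ∀ q : G ⧸ H,
      (LL H (grpIdem G K * b q)) q = (Nat.card K : ℂ)⁻¹ • S := by
    intro q
    rw [hbq, heK, smul_mul_assoc, Finset.sum_mul, LL_apply, map_smul, map_sum,
      Finsupp.smul_apply, Finsupp.finset_sum_apply]
    congr 1
    have hterm : ∀ k : ↥K,
        (L0 H (MonoidAlgebra.single ((k:G)) (1:ℂ) * MonoidAlgebra.single (Quotient.out q) (1:ℂ))) q
          = if hk : (k : G) ∈ H then MonoidAlgebra.single (⟨(k:G), hk⟩ : ↥H) (1:ℂ) else 0 := by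
      intro k
      have h1 : (MonoidAlgebra.single ((k:G)) (1:ℂ) * MonoidAlgebra.single (Quotient.out q) (1:ℂ))
          = MonoidAlgebra.single ((k:G) * Quotient.out q) (1:ℂ) := by
        rw [MonoidAlgebra.single_mul_single, one_mul]
      rw [h1, L0_single, Finsupp.single_apply]
      by_cases hk : (k : G) ∈ H
      · have hmk : QuotientGroup.mk (s := H) ((k:G) * Quotient.out q) = q := by
          rw [mul_comm, QuotientGroup.mk_mul_of_mem _ hk, QuotientGroup.out_eq']
        rw [if_pos hmk, dif_pos hk]
        congr 1
        refine Subtype.ext ?_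
        show (Quotient.out (QuotientGroup.mk (s := H) ((k:G) * Quotient.out q)))⁻¹ * _ = _
        rw [hmk, mul_comm ((k:G)) (Quotient.out q), inv_mul_cancel_left]
      · have hmk : QuotientGroup.mk (s := H) ((k:G) * Quotient.out q) ≠ q := by
          intro hEq
          apply hk
          have h5 : QuotientGroup.mk (s := H) ((k:G) * Quotient.out q)
              = QuotientGroup.mk (s := H) (Quotient.out q) := by
            rw [hEq, QuotientGroup.out_eq']
          have h6 := QuotientGroup.eq.mp h5
          have h7 : ((k:G) * Quotient.out q)⁻¹ * Quotient.out q = (k:G)⁻¹ := by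
            rw [mul_inv_rev, mul_comm ((Quotient.out q)⁻¹) ((k:G)⁻¹), mul_assoc,
              inv_mul_cancel, mul_one]
          rw [h7] at h6
          exact H.inv_mem_iff.mp h6
        rw [if_neg hmk, dif_neg hk]
    calc ∑ k : ↥K,
        (L0 H (MonoidAlgebra.single ((k:G)) (1:ℂ) * MonoidAlgebra.single (Quotient.out q) (1:ℂ))) q
        = ∑ k : ↥K, if hk : (k : G) ∈ H then MonoidAlgebra.single (⟨(k:G), hk⟩ : ↥H) (1:ℂ) else 0 :=
          Finset.sum_congr rfl (fun k _ => hterm k)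
      _ = S := by
          rw [Finset.sum_dite]
          simp only [Finset.sum_const_zero, add_zero]
          rw [hS]
          let e : {x : ↥K // x ∈ Finset.filter (fun k : ↥K => (k : G) ∈ H) Finset.univ} ≃
              ↥(K.subgroupOf H) :=
            { toFun := fun x => ⟨⟨(x.1 : G), (Finset.mem_filter.mp x.2).2⟩,
                Subgroup.mem_subgroupOf.mpr x.1.2⟩
              invFun := fun y => ⟨⟨((y : ↥H) : G), Subgroup.mem_subgroupOf.mp y.2⟩, by
                simp only [Finset.mem_filter, Finset.mem_univ, true_and]
                exact (y : ↥H).2⟩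
              left_inv := fun x => Subtype.ext (Subtype.ext rfl)
              right_inv := fun y => Subtype.ext (Subtype.ext rfl) }
          exact Fintype.sum_equiv e _ _ (fun x => rfl)
  -- compute the trace
  have htr : grpTrace G H (grpIdem G K)
      = (Nat.card (G ⧸ H)) • ((Nat.card K : ℂ)⁻¹ • S) := by
    rw [grpTrace]
    rw [LinearMap.trace_eq_matrix_trace (MonoidAlgebra ℂ ↥H) b, Matrix.trace]
    have : ∀ q : G ⧸ H,
        (LinearMap.toMatrix b b (LinearMap.mulLeft (MonoidAlgebra ℂ ↥H) (grpIdem G K))).diag q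
          = (Nat.card K : ℂ)⁻¹ • S := by
      intro q
      rw [Matrix.diag, LinearMap.toMatrix_apply, LinearMap.mulLeft_apply]
      exact hdiag q
    rw [Finset.sum_congr rfl (fun q _ => this q), Finset.sum_const, Finset.card_univ,
      Nat.card_eq_fintype_card (α := G ⧸ H)]
  rw [htr, grpIdem, finsum_eq_sum_of_fintype]
  have hcard : Nat.card ↥(K ⊓ H) = Nat.card ↥(K.subgroupOf H) := by
    rw [← Subgroup.inf_subgroupOf_right K H]
    exact (Nat.card_congr (Subgroup.subgroupOfEquivOfLe inf_le_right).toEquiv).symm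
  have hSof : (∑ y : ↥(K.subgroupOf H), MonoidAlgebra.of ℂ ↥H ((y : ↥(K.subgroupOf H)) : ↥H)) = S := by
    rw [hS]; rfl
  rw [hSof, hcard]
  rw [← Nat.cast_smul_eq_nsmul ℂ, smul_smul, smul_smul]
  congr 1
  have hK0 : (Nat.card ↥K : ℂ) ≠ 0 := by
    exact_mod_cast Nat.cast_ne_zero.mpr (Nat.card_pos (α := ↥K)).ne'
  have hKH0 : (Nat.card ↥(K.subgroupOf H) : ℂ) ≠ 0 := by
    exact_mod_cast Nat.cast_ne_zero.mpr (Nat.card_pos (α := ↥(K.subgroupOf H))).ne'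
  field_simp
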